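/- Let σ_0 = 1, σ_d = 0, and σ_1, ..., σ_{d-1} be the elementary symmetric polynomials in a_1, ..., a_{d-1} ∈ 𝔻, defining the canonical Blaschke product B(z) = (∑_{k=0}^{d} (−1)^k σ_k z^{d−k}) / (∑_{k=0}^{d-1} (−1)^k conj(σ_k) z^k). If z_1, z_2 are on the unit circle with B(z_1) = B(z_2), then ∑_{j=1}^d ∑_{k=1}^d (−1)^{j+k} conj(σ_{d−j}) σ_{d−k} (z_1^k z_2^{d−j} − z_1^{d−j} z_2^k) = 0. -/

import Mathlib

open Complex Finset

private lemma expandP_aux (d : ℕ) (hd : 1 ≤ d)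
    (a : Fin (d - 1) → ℂ) (σ : ℕ → ℂ)
    (hσ : ∀ n, σ n = ∑ t ∈ (Finset.univ : Finset (Fin (d - 1))).powersetCard n,
      ∏ i ∈ t, a i)
    (z : ℂ) :
    z * ∏ k, (z - a k) = ∑ n ∈ range d, (-1:ℂ)^n * σ n * z^(d-n) := by
  have h1 : ∀ k : Fin (d-1), z - a k = -a k + z := fun k => by ring
  have hcard : (univ : Finset (Fin (d-1))).card = d - 1 := by simp
  rw [show (∏ k, (z - a k)) = ∏ k, (-a k + z) from prod_congr rfl fun k _ => h1 k,
    Finset.prod_add, powerset_card_biUnion,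
    sum_biUnion ((pairwise_disjoint_powersetCard _).set_pairwise _), hcard,
    Nat.sub_add_cancel hd, Finset.mul_sum]
  refine sum_congr rfl fun n hn => ?_
  have hn' : n ≤ d - 1 := by
    have := mem_range.mp hn; omega
  have : ∀ t ∈ (univ : Finset (Fin (d-1))).powersetCard n,
      (∏ i ∈ t, -a i) * ∏ i ∈ univ \ t, z
        = (-1:ℂ)^n * (∏ i ∈ t, a i) * z^(d-1-n) := by
    intro t ht
    obtain ⟨-, htc⟩ := mem_powersetCard.mp ht
    rw [prod_const, card_sdiff_of_subset (subset_univ t), hcard, htc]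
    rw [show (∏ i ∈ t, -a i) = (-1:ℂ)^n * ∏ i ∈ t, a i by
      rw [← htc]
      calc ∏ i ∈ t, -a i = ∏ i ∈ t, (-1:ℂ) * a i := by
            exact prod_congr rfl fun i _ => (neg_one_mul _).symm
        _ = (-1:ℂ)^t.card * ∏ i ∈ t, a i := by rw [prod_mul_distrib, prod_const]]
  rw [sum_congr rfl this, ← sum_mul, ← mul_sum, ← hσ]
  have : z * ((-1:ℂ)^n * σ n * z^(d-1-n)) = (-1)^n * σ n * (z * z^(d-1-n)) := by ring
  rw [this, ← pow_succ']
  congr 2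
  omega

private lemma expandQ_aux (d : ℕ) (hd : 1 ≤ d)
    (a : Fin (d - 1) → ℂ) (σ : ℕ → ℂ)
    (hσ : ∀ n, σ n = ∑ t ∈ (Finset.univ : Finset (Fin (d - 1))).powersetCard n,
      ∏ i ∈ t, a i)
    (z : ℂ) :
    (∏ k, (1 - (starRingEnd ℂ) (a k) * z))
      = ∑ n ∈ range d, (-1:ℂ)^n * (starRingEnd ℂ) (σ n) * z^n := by
  have h1 : ∀ k : Fin (d-1), 1 - (starRingEnd ℂ) (a k) * z
      = -((starRingEnd ℂ) (a k) * z) + 1 := fun k => by ring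
  have hcard : (univ : Finset (Fin (d-1))).card = d - 1 := by simp
  rw [show (∏ k, (1 - (starRingEnd ℂ) (a k) * z))
      = ∏ k, (-((starRingEnd ℂ) (a k) * z) + 1) from prod_congr rfl fun k _ => h1 k,
    Finset.prod_add, powerset_card_biUnion,
    sum_biUnion ((pairwise_disjoint_powersetCard _).set_pairwise _), hcard,
    Nat.sub_add_cancel hd]
  refine sum_congr rfl fun n hn => ?_
  have : ∀ t ∈ (univ : Finset (Fin (d-1))).powersetCard n,
      (∏ i ∈ t, -((starRingEnd ℂ) (a i) * z)) * ∏ i ∈ univ \ t, (1:ℂ)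
        = (-1:ℂ)^n * (starRingEnd ℂ) (∏ i ∈ t, a i) * z^n := by
    intro t ht
    obtain ⟨-, htc⟩ := mem_powersetCard.mp ht
    rw [prod_const_one, mul_one]
    calc ∏ i ∈ t, -((starRingEnd ℂ) (a i) * z)
        = ∏ i ∈ t, (-1:ℂ) * (starRingEnd ℂ) (a i) * z := by
          exact prod_congr rfl fun i _ => by ring
      _ = (-1:ℂ)^t.card * (∏ i ∈ t, (starRingEnd ℂ) (a i)) * z^t.card := by
          rw [prod_mul_distrib, prod_mul_distrib, prod_const, prod_const]
      _ = (-1:ℂ)^n * (starRingEnd ℂ) (∏ i ∈ t, a i) * z^n := by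
          rw [htc, map_prod]
  rw [sum_congr rfl this, ← sum_mul, ← mul_sum, hσ, map_sum]

theorem exterior_curve_symmetric_relation (d : ℕ) (hd : 1 ≤ d)
    (a : Fin (d - 1) → ℂ) (ha : ∀ k, ‖a k‖ < 1)
    (σ : ℕ → ℂ)
    (hσ : ∀ n, σ n = ∑ t ∈ (Finset.univ : Finset (Fin (d - 1))).powersetCard n,
      ∏ i ∈ t, a i)
    (B : ℂ → ℂ)
    (hB : ∀ z, B z = z * ∏ k, (z - a k) / (1 - (starRingEnd ℂ) (a k) * z))
    (z₁ z₂ : ℂ) (hz₁ : ‖z₁‖ = 1) (hz₂ : ‖z₂‖ = 1)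
    (heq : B z₁ = B z₂) :
    ∑ j ∈ Finset.Icc 1 d, ∑ k ∈ Finset.Icc 1 d,
      (-1 : ℂ) ^ (j + k) * (starRingEnd ℂ) (σ (d - j)) * σ (d - k) *
        (z₁ ^ k * z₂ ^ (d - j) - z₁ ^ (d - j) * z₂ ^ k) = 0 := by
  set P : ℂ → ℂ := fun z => z * ∏ k, (z - a k) with hP
  set Q : ℂ → ℂ := fun z => ∏ k, (1 - (starRingEnd ℂ) (a k) * z) with hQ
  -- Q nonzero on circle
  have hQne : ∀ z : ℂ, ‖z‖ = 1 → Q z ≠ 0 := by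
    intro z hz
    refine prod_ne_zero_iff.mpr fun k _ => ?_
    intro h0
    have : ‖(starRingEnd ℂ) (a k) * z‖ = 1 := by
      have : (starRingEnd ℂ) (a k) * z = 1 := by linear_combination -h0
      rw [this]; simp
    rw [norm_mul, Complex.norm_conj, hz, mul_one] at this
    exact absurd this (ne_of_lt (ha k))
  -- key equality
  have key : P z₁ * Q z₂ = P z₂ * Q z₁ := by
    have h1 := hB z₁; have h2 := hB z₂
    rw [prod_div_distrib] at h1 h2
    have := heq
    rw [h1, h2] at this
    rw [mul_div_assoc', mul_div_assoc', div_eq_div_iff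
      (show (∏ k, (1 - (starRingEnd ℂ) (a k) * z₁)) ≠ 0 from hQne z₁ hz₁)
      (show (∏ k, (1 - (starRingEnd ℂ) (a k) * z₂)) ≠ 0 from hQne z₂ hz₂)] at this
    simp only [hP, hQ]
    linear_combination this
  -- reindexed sums
  have hA : ∀ w : ℂ, (∑ j ∈ Finset.Icc 1 d, (-1:ℂ)^j * (starRingEnd ℂ) (σ (d - j)) * w ^ (d-j))
      = (-1:ℂ)^d * Q w := by
    intro w
    simp only [hQ]
    rw [expandQ_aux d hd a σ hσ w, mul_sum]
    refine Finset.sum_nbij' (fun j => d - j) (fun n => d - n) ?_ ?_ ?_ ?_ ?_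
    · intro j hj; simp only [mem_Icc] at hj; simp only [mem_range]; omega
    · intro n hn; simp only [mem_range] at hn; simp only [mem_Icc]; omega
    · intro j hj; simp only [mem_Icc] at hj; show d - (d - j) = j; omega
    · intro n hn; simp only [mem_range] at hn; show d - (d - n) = n; omega
    · intro j hj
      beta_reduce
      simp only [mem_Icc] at hj
      have hsign : ((-1:ℂ))^d * (-1:ℂ)^(d-j) = (-1:ℂ)^j := by
        rw [← pow_add, show d + (d-j) = j + 2*(d-j) by omega, pow_add, pow_mul]
        simp
      linear_combination (-((starRingEnd ℂ) (σ (d-j)) * w^(d-j))) * hsign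
  have hBfac : ∀ w : ℂ, (∑ k ∈ Finset.Icc 1 d, (-1:ℂ)^k * σ (d - k) * w ^ k)
      = (-1:ℂ)^d * P w := by
    intro w
    simp only [hP]
    rw [expandP_aux d hd a σ hσ w, mul_sum]
    refine Finset.sum_nbij' (fun k => d - k) (fun n => d - n) ?_ ?_ ?_ ?_ ?_
    · intro j hj; simp only [mem_Icc] at hj; simp only [mem_range]; omega
    · intro n hn; simp only [mem_range] at hn; simp only [mem_Icc]; omega
    · intro j hj; simp only [mem_Icc] at hj; show d - (d - j) = j; omega
    · intro n hn; simp only [mem_range] at hn; show d - (d - n) = n; omega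
    · intro k hk
      beta_reduce
      simp only [mem_Icc] at hk
      have hsign : ((-1:ℂ))^d * (-1:ℂ)^(d-k) = (-1:ℂ)^k := by
        rw [← pow_add, show d + (d-k) = k + 2*(d-k) by omega, pow_add, pow_mul]
        simp
      rw [show d - (d-k) = k by omega]
      linear_combination (-(σ (d-k) * w^k)) * hsign
  -- assemble
  have expand : ∑ j ∈ Finset.Icc 1 d, ∑ k ∈ Finset.Icc 1 d,
      (-1 : ℂ) ^ (j + k) * (starRingEnd ℂ) (σ (d - j)) * σ (d - k) *
        (z₁ ^ k * z₂ ^ (d - j) - z₁ ^ (d - j) * z₂ ^ k)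
      = (∑ j ∈ Finset.Icc 1 d, (-1:ℂ)^j * (starRingEnd ℂ) (σ (d - j)) * z₂ ^ (d-j)) *
          (∑ k ∈ Finset.Icc 1 d, (-1:ℂ)^k * σ (d - k) * z₁ ^ k)
        - (∑ j ∈ Finset.Icc 1 d, (-1:ℂ)^j * (starRingEnd ℂ) (σ (d - j)) * z₁ ^ (d-j)) *
          (∑ k ∈ Finset.Icc 1 d, (-1:ℂ)^k * σ (d - k) * z₂ ^ k) := by
    rw [sum_mul_sum, sum_mul_sum, ← sum_sub_distrib]
    refine sum_congr rfl fun j _ => ?_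
    rw [← sum_sub_distrib]
    refine sum_congr rfl fun k _ => ?_
    rw [pow_add]
    ring
  rw [expand, hA z₂, hA z₁, hBfac z₁, hBfac z₂]
  have : (-1:ℂ)^d * Q z₂ * ((-1:ℂ)^d * P z₁) - (-1:ℂ)^d * Q z₁ * ((-1:ℂ)^d * P z₂)
      = ((-1:ℂ)^d)^2 * (P z₁ * Q z₂ - P z₂ * Q z₁) := by ring
  rw [this, key]
  ring
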